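/- Let k, l < ω, let F : {0,…,l} → {0,…,k} be a function, fix ordinals ε_0 ≥ … ≥ ε_l, set γ_0 = 0 and γ_{i+1} = γ_i + ω^{ε_i}, and let P be a tree with rank(P) = ω^{ε_0} + … + ω^{ε_l}. Define f : P → {0,…,k} by f(t) = F(i) for t ∈ P^{γ_i} \ P^{γ_{i+1}}. Then for every j ≤ k, writing A = {i ≤ l : F(i) = j} = {a(0) < … < a(p)} and α = ω^{ε_{a(0)}} + … + ω^{ε_{a(p)}} (with α = 0 if A = ∅), every subtree Q of P on which f is identically j satisfies rank(Q) ≤ α. -/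

import Mathlib

open Ordinal Set

universe u

/-- The set of maximal elements ("leaves") of `P`. -/
def treeLeaves {α : Type u} [PartialOrder α] (P : Set α) : Set α :=
  {t ∈ P | ∀ s ∈ P, ¬ t < s}

/-- The derivative `P' = P \ Leaves P`. -/
def treeDeriv {α : Type u} [PartialOrder α] (P : Set α) : Set α :=
  P \ treeLeaves P

/-- The transfinite iterated derivative `P^ξ`. -/
noncomputable def derivIter {α : Type u} [PartialOrder α] (P : Set α) (ξ : Ordinal.{u}) :
    Set α :=
  Ordinal.limitRecOn ξ P (fun _ ih => treeDeriv ih)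
    (fun o _ ih => ⋂ (ζ : Set.Iio o), ih ζ.1 ζ.2)

/-- `P` is a tree: every ancestor set is well-ordered (a well-founded chain). -/
def IsTree {α : Type u} [PartialOrder α] (P : Set α) : Prop :=
  ∀ t ∈ P, IsChain (· ≤ ·) {s ∈ P | s ≤ t} ∧ {s ∈ P | s ≤ t}.WellFoundedOn (· < ·)

/-- `P` is well-founded: some transfinite derivative is empty. -/
def IsWFTree {α : Type u} [PartialOrder α] (P : Set α) : Prop :=
  ∃ ξ : Ordinal.{u}, derivIter P ξ = ∅

/-- The rank of a well-founded tree: the least `ξ` with `P^ξ = ∅`. -/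
noncomputable def treeRank {α : Type u} [PartialOrder α] (P : Set α) : Ordinal.{u} :=
  sInf {ξ | derivIter P ξ = ∅}

/-- `τ_P(t)`: the largest ordinal `ξ` with `t ∈ P^ξ`. -/
noncomputable def treeTau {α : Type u} [PartialOrder α] (P : Set α) (t : α) : Ordinal.{u} :=
  sSup {ξ | t ∈ derivIter P ξ}

/-- `τ_{P,β}(t)`: the largest ordinal `ξ` with `t ∈ P^{β·ξ}`. -/
noncomputable def treeTauMul {α : Type u} [PartialOrder α] (P : Set α) (β : Ordinal.{u})
    (t : α) : Ordinal.{u} :=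
  sSup {ξ | t ∈ derivIter P (β * ξ)}

/-- `alpProd ε i = ω^{ω^{ε 0}} · ⋯ · ω^{ω^{ε i}}`. -/
noncomputable def alpProd (ε : ℕ → Ordinal.{u}) : ℕ → Ordinal.{u}
  | 0 => omega0 ^ omega0 ^ ε 0
  | (i + 1) => alpProd ε i * omega0 ^ omega0 ^ ε (i + 1)

/-- The separation function `ς_P` of a tree whose rank has decomposition
`ω^{ω^{ε 0}} ⋯ ω^{ω^{ε l}}`: the least `i` such that `s, t` lie in the same block
`P^{α_i·δ} \ P^{α_i·(δ+1)}` for some ordinal `δ`. -/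
noncomputable def sep {α : Type u} [PartialOrder α] (P : Set α) (ε : ℕ → Ordinal.{u})
    (s t : α) : ℕ :=
  sInf {i : ℕ | ∃ δ : Ordinal.{u},
    s ∈ derivIter P (alpProd ε i * δ) \ derivIter P (alpProd ε i * (δ + 1)) ∧
    t ∈ derivIter P (alpProd ε i * δ) \ derivIter P (alpProd ε i * (δ + 1))}

/-- `indProd ε A l = ω^{ω^{ε 0}·1_A(0)} ⋯ ω^{ω^{ε l}·1_A(l)}`. -/
noncomputable def indProd (ε : ℕ → Ordinal.{u}) (A : Set ℕ) : ℕ → Ordinal.{u}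
  | 0 => omega0 ^ (omega0 ^ ε 0 * A.indicator (fun _ => (1 : Ordinal.{u})) 0)
  | (i + 1) => indProd ε A i *
      omega0 ^ (omega0 ^ ε (i + 1) * A.indicator (fun _ => (1 : Ordinal.{u})) (i + 1))

/-- `sumPow ε i = ω^{ε 0} + ⋯ + ω^{ε (i-1)}` (the partial sums `γ_i`). -/
noncomputable def sumPow (ε : ℕ → Ordinal.{u}) : ℕ → Ordinal.{u}
  | 0 => 0
  | (i + 1) => sumPow ε i + omega0 ^ ε i

/-- `indSum ε A i = Σ_{n < i} 1_A(n)·ω^{ε n}`. -/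
noncomputable def indSum (ε : ℕ → Ordinal.{u}) (A : Set ℕ) : ℕ → Ordinal.{u}
  | 0 => 0
  | (i + 1) => indSum ε A i + A.indicator (fun _ => (1 : Ordinal.{u})) i * omega0 ^ ε i



section Aux

variable {α : Type u} [PartialOrder α]

lemma derivIter_zero (P : Set α) : derivIter P 0 = P :=
  Ordinal.limitRecOn_zero _ _ _

lemma derivIter_succ (P : Set α) (ξ : Ordinal.{u}) :
    derivIter P (ξ + 1) = treeDeriv (derivIter P ξ) := by
  unfold derivIter
  rw [← Order.succ_eq_add_one, Ordinal.limitRecOn_succ]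

lemma derivIter_limit (P : Set α) {o : Ordinal.{u}} (ho : Order.IsSuccLimit o) :
    derivIter P o = ⋂ (ζ : Set.Iio o), derivIter P ζ.1 :=
  Ordinal.limitRecOn_limit _ _ _ _ ho

lemma treeDeriv_subset (P : Set α) : treeDeriv P ⊆ P := Set.diff_subset

lemma treeDeriv_mono {P Q : Set α} (h : Q ⊆ P) : treeDeriv Q ⊆ treeDeriv P := by
  rintro t ⟨htQ, hnl⟩
  have hex : ∃ s ∈ Q, t < s := by
    by_contra hc
    push_neg at hc
    exact hnl ⟨htQ, fun s hs => hc s hs⟩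
  obtain ⟨s, hsQ, hts⟩ := hex
  exact ⟨h htQ, fun hleaf => hleaf.2 s (h hsQ) hts⟩

lemma derivIter_mono {P Q : Set α} (h : Q ⊆ P) (ξ : Ordinal.{u}) :
    derivIter Q ξ ⊆ derivIter P ξ := by
  induction ξ using Ordinal.limitRecOn with
  | zero => rw [derivIter_zero, derivIter_zero]; exact h
  | add_one ξ ih =>
    rw [derivIter_succ, derivIter_succ]
    exact treeDeriv_mono ih
  | limit o ho ih =>
    rw [derivIter_limit Q ho, derivIter_limit P ho]
    exact Set.iInter_mono fun ζ => ih ζ.1 ζ.2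

lemma derivIter_subset (P : Set α) (ξ : Ordinal.{u}) : derivIter P ξ ⊆ P := by
  induction ξ using Ordinal.limitRecOn with
  | zero => rw [derivIter_zero]
  | add_one ξ ih =>
    rw [derivIter_succ]
    exact (treeDeriv_subset _).trans ih
  | limit o ho ih =>
    rw [derivIter_limit P ho]
    exact (Set.iInter_subset _ ⟨0, ho.pos⟩).trans (ih 0 ho.pos)

lemma derivIter_anti (P : Set α) : ∀ {a b : Ordinal.{u}}, a ≤ b →
    derivIter P b ⊆ derivIter P a := by
  intro a b
  induction b using Ordinal.limitRecOn with
  | zero => intro h; rw [nonpos_iff_eq_zero.mp h]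
  | add_one b ih =>
    intro h
    rcases eq_or_lt_of_le h with rfl | hlt
    · exact subset_rfl
    · have : a ≤ b := Order.lt_add_one_iff.mp hlt
      rw [derivIter_succ]
      exact (treeDeriv_subset _).trans (ih this)
  | limit o ho _ =>
    intro h
    rcases eq_or_lt_of_le h with rfl | hlt
    · exact subset_rfl
    · rw [derivIter_limit P ho]
      exact Set.iInter_subset (fun ζ : Set.Iio o => derivIter P ζ.1) ⟨a, hlt⟩

lemma derivIter_add (P : Set α) (a c : Ordinal.{u}) :
    derivIter P (a + c) = derivIter (derivIter P a) c := by
  induction c using Ordinal.limitRecOn with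
  | zero => rw [add_zero, derivIter_zero]
  | add_one c ih =>
    rw [← add_assoc, derivIter_succ, derivIter_succ, ih]
  | limit o ho ih =>
    rw [derivIter_limit _ ho, derivIter_limit P (Ordinal.isSuccLimit_add a ho)]
    ext t
    simp only [Set.mem_iInter, Subtype.forall, Set.mem_Iio]
    constructor
    · intro H ξ hξ
      rw [← ih ξ hξ]
      exact H (a + ξ) ((add_lt_add_iff_left a).mpr hξ)
    · intro H ζ hζ
      rcases le_or_gt ζ a with hle | hgt
      · have h0 : t ∈ derivIter P a := by
          have := H 0 ho.pos
          rwa [← ih 0 ho.pos, add_zero] at this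
        exact derivIter_anti P hle h0
      · have hsub : ζ - a < o := by
          by_contra hc
          push_neg at hc
          have : a + o ≤ a + (ζ - a) := add_le_add_right hc a
          rw [Ordinal.add_sub_cancel_of_le hgt.le] at this
          exact absurd hζ (not_lt.mpr this)
        have := H (ζ - a) hsub
        rw [← ih (ζ - a) hsub, Ordinal.add_sub_cancel_of_le hgt.le] at this
        exact this

end Aux

/-- if `f : P → {0,…,k}` is constantly `F(i)` on the level
`P^{γ_i} \ P^{γ_{i+1}}` for each `i ≤ l`, then for every color `j`, any subtree `Q`
of `P` on which `f` is identically `j` has rank at most `Σ_{i ∈ A} ω^{ε_i}`,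
where `A = {i ≤ l : F(i) = j}` (the bound is `0` when `A = ∅`). -/
theorem statement7 {α : Type u} [PartialOrder α] (l k : ℕ)
    (F : Fin (l + 1) → Fin (k + 1)) (ε : ℕ → Ordinal.{u})
    (hε : ∀ i < l, ε (i + 1) ≤ ε i) (P : Set α) (hP : IsTree P) (hWF : IsWFTree P)
    (hrank : treeRank P = sumPow ε (l + 1)) (f : α → Fin (k + 1))
    (hf : ∀ (i : ℕ) (hi : i ≤ l),
      ∀ t ∈ derivIter P (sumPow ε i) \ derivIter P (sumPow ε (i + 1)),
        f t = F ⟨i, Nat.lt_succ_of_le hi⟩)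
    (j : Fin (k + 1)) (Q : Set α) (hQP : Q ⊆ P) (hconst : ∀ t ∈ Q, f t = j) :
    treeRank Q ≤ indSum ε {i : ℕ | ∃ h : i < l + 1, F ⟨i, h⟩ = j} (l + 1) := by
  classical
  set A : Set ℕ := {i : ℕ | ∃ h : i < l + 1, F ⟨i, h⟩ = j} with hA
  -- P^{rank P} = ∅
  have hPempty : derivIter P (sumPow ε (l + 1)) = ∅ := by
    rw [← hrank]
    exact csInf_mem hWF
  -- main induction
  have key : ∀ i : ℕ, i ≤ l + 1 →
      derivIter Q (indSum ε A i) ⊆ derivIter P (sumPow ε i) := by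
    intro i
    induction i with
    | zero =>
      intro _
      rw [show indSum ε A 0 = 0 from rfl, show sumPow ε 0 = 0 from rfl,
        derivIter_zero, derivIter_zero]
      exact hQP
    | succ i ih =>
      intro hi
      have hi' : i ≤ l := Nat.lt_succ_iff.mp hi
      have prev := ih (Nat.le_succ_of_le hi')
      rw [show indSum ε A (i + 1)
          = indSum ε A i + A.indicator (fun _ => (1 : Ordinal.{u})) i * omega0 ^ ε i from rfl,
        show sumPow ε (i + 1) = sumPow ε i + omega0 ^ ε i from rfl]
      by_cases hiA : i ∈ A
      · rw [Set.indicator_of_mem hiA, one_mul, derivIter_add, derivIter_add]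
        exact derivIter_mono prev _
      · rw [Set.indicator_of_notMem hiA, zero_mul, add_zero]
        intro t ht
        have htQ : t ∈ Q := derivIter_subset Q _ ht
        have htP : t ∈ derivIter P (sumPow ε i) := prev ht
        by_contra htP'
        have hft := hf i hi' t ⟨htP, htP'⟩
        rw [hconst t htQ] at hft
        exact hiA ⟨Nat.lt_succ_of_le hi', hft.symm⟩
  have hQempty : derivIter Q (indSum ε A (l + 1)) = ∅ := by
    have := key (l + 1) le_rfl
    rw [hPempty] at this
    exact Set.subset_empty_iff.mp this
  exact csInf_le' hQempty
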